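/- Let A be a real n×n strictly diagonally dominant matrix, i.e. |a_ii| > Σ_{j≠i} |a_ij| for every i. Then A is invertible, and for every real n×n matrix B, the operator norm of A⁻¹B induced by the ℓ∞ vector norm satisfies ‖A⁻¹B‖_∞ ≤ max_i ( Σ_j |b_ij| ) / ( |a_ii| − Σ_{j≠i} |a_ij| ). -/

import Mathlib

/-- The operator norm on real `n × n` matrices induced by the `ℓ∞` vector norm,
which equals the maximum absolute row sum. -/
noncomputable def linftyOpNorm {n : ℕ} (M : Matrix (Fin n) (Fin n) ℝ) : ℝ :=
  ⨆ i : Fin n, ∑ j, |M i j|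

/-- If `A` is strictly diagonally dominant, then `A` is invertible and
for every `B`, `‖A⁻¹ B‖_∞ ≤ max_i (Σ_j |b_ij|) / (|a_ii| − Σ_{j≠i} |a_ij|)`. -/
theorem sdd_inv_mul_linfty_bound {n : ℕ} (A : Matrix (Fin n) (Fin n) ℝ)
    (hA : ∀ i : Fin n, ∑ j ∈ Finset.univ.erase i, |A i j| < |A i i|) :
    IsUnit A ∧
      ∀ B : Matrix (Fin n) (Fin n) ℝ,
        linftyOpNorm (A⁻¹ * B) ≤
          ⨆ i : Fin n,
            (∑ j, |B i j|) / (|A i i| - ∑ j ∈ Finset.univ.erase i, |A i j|) := by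
  have hdet : A.det ≠ 0 := by
    apply det_ne_zero_of_sum_row_lt_diag
    simpa [Real.norm_eq_abs] using hA
  refine ⟨(Matrix.isUnit_iff_isUnit_det A).mpr (isUnit_iff_ne_zero.mpr hdet), ?_⟩
  intro B
  rcases Nat.eq_zero_or_pos n with h0 | hn
  · subst h0
    simp [linftyOpNorm, Real.iSup_of_isEmpty]
  haveI : Nonempty (Fin n) := Fin.pos_iff_nonempty.mp hn
  set X := A⁻¹ * B with hX
  set s : Fin n → ℝ := fun i => ∑ k, |X i k| with hs
  obtain ⟨i₀, hi₀⟩ := Finite.exists_max s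
  have hAX : A * X = B := by
    rw [hX, ← mul_assoc, Matrix.mul_nonsing_inv A (isUnit_iff_ne_zero.mpr hdet), one_mul]
  have habs : ∀ j, (0:ℝ) ≤ |A i₀ j| := fun j => abs_nonneg _
  -- key inequality
  have key : |A i₀ i₀| * s i₀ ≤ (∑ k, |B i₀ k|) +
      (∑ j ∈ Finset.univ.erase i₀, |A i₀ j|) * s i₀ := by
    have hrow : ∀ k, A i₀ i₀ * X i₀ k =
        B i₀ k - ∑ j ∈ Finset.univ.erase i₀, A i₀ j * X j k := by
      intro k
      have : B i₀ k = ∑ j, A i₀ j * X j k := by rw [← hAX, Matrix.mul_apply]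
      rw [this, ← Finset.add_sum_erase _ _ (Finset.mem_univ i₀)]
      ring
    have hk : ∀ k, |A i₀ i₀| * |X i₀ k| ≤
        |B i₀ k| + ∑ j ∈ Finset.univ.erase i₀, |A i₀ j| * |X j k| := by
      intro k
      rw [← abs_mul, hrow k]
      calc |B i₀ k - ∑ j ∈ Finset.univ.erase i₀, A i₀ j * X j k|
          ≤ |B i₀ k| + |∑ j ∈ Finset.univ.erase i₀, A i₀ j * X j k| := abs_sub _ _
        _ ≤ |B i₀ k| + ∑ j ∈ Finset.univ.erase i₀, |A i₀ j * X j k| := by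
            gcongr; exact Finset.abs_sum_le_sum_abs _ _
        _ = |B i₀ k| + ∑ j ∈ Finset.univ.erase i₀, |A i₀ j| * |X j k| := by
            simp [abs_mul]
    calc |A i₀ i₀| * s i₀ = ∑ k, |A i₀ i₀| * |X i₀ k| := by
          rw [hs]; simp [Finset.mul_sum]
      _ ≤ ∑ k, (|B i₀ k| + ∑ j ∈ Finset.univ.erase i₀, |A i₀ j| * |X j k|) := by
          exact Finset.sum_le_sum fun k _ => hk k
      _ = (∑ k, |B i₀ k|) + ∑ j ∈ Finset.univ.erase i₀, |A i₀ j| * s j := by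
          rw [Finset.sum_add_distrib, Finset.sum_comm]
          simp [hs, Finset.mul_sum]
      _ ≤ (∑ k, |B i₀ k|) + ∑ j ∈ Finset.univ.erase i₀, |A i₀ j| * s i₀ := by
          gcongr with j hj
          · exact hi₀ j
      _ = (∑ k, |B i₀ k|) + (∑ j ∈ Finset.univ.erase i₀, |A i₀ j|) * s i₀ := by
          rw [Finset.sum_mul]
  have hd : (0:ℝ) < |A i₀ i₀| - ∑ j ∈ Finset.univ.erase i₀, |A i₀ j| :=
    sub_pos.mpr (hA i₀)
  have hs0 : s i₀ ≤ (∑ k, |B i₀ k|) /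
      (|A i₀ i₀| - ∑ j ∈ Finset.univ.erase i₀, |A i₀ j|) := by
    rw [le_div_iff₀ hd]
    nlinarith [key]
  have hsup : s i₀ ≤ ⨆ i : Fin n,
      (∑ j, |B i j|) / (|A i i| - ∑ j ∈ Finset.univ.erase i, |A i j|) :=
    hs0.trans (le_ciSup (f := fun i => (∑ j, |B i j|) /
      (|A i i| - ∑ j ∈ Finset.univ.erase i, |A i j|))
      (Set.Finite.bddAbove (Set.finite_range _)) i₀)
  calc linftyOpNorm X ≤ s i₀ := ciSup_le fun i => hi₀ i
    _ ≤ _ := hsup
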